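/- arXiv:2404.02641 — 3 statements merged into one kernel-verified Lean document; each statement's English description precedes it below -/
import Mathlib

section
/- For A = (J−R)Q with J skew-symmetric, R symmetric positive semidefinite, Q symmetric positive semidefinite, and any step size h > 0, the matrix I − hA is invertible. -/
open Matrix

/-- For `A = (J - R) Q` with `J` skew-symmetric, `R, Q` symmetric positive semidefinite and
any step size `h > 0`, the matrix `I - h A` is invertible. -/
theorem implicit_euler_invertible
    {n : ℕ} (J R Q : Matrix (Fin n) (Fin n) ℝ)
    (hJ : Jᵀ = -J) (hR : R.PosSemidef) (hQ : Q.PosSemidef)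
    (h : ℝ) (hh : 0 < h) :
    ((1 : Matrix (Fin n) (Fin n) ℝ) - h • ((J - R) * Q)).det ≠ 0 := by
  intro hdet
  obtain ⟨v, hv, hv0⟩ := Matrix.exists_mulVec_eq_zero_iff.mpr hdet
  set y : Fin n → ℝ := Q *ᵥ v with hy
  have hveq : v = h • ((J - R) *ᵥ y) := by
    have := hv0
    rw [sub_mulVec, one_mulVec, smul_mulVec, sub_eq_zero] at this
    rw [this, ← mulVec_mulVec]
  -- y ⬝ᵥ J *ᵥ y = 0
  have hJy : y ⬝ᵥ J *ᵥ y = 0 := by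
    have h1 : y ⬝ᵥ J *ᵥ y = Jᵀ *ᵥ y ⬝ᵥ y := by
      rw [dotProduct_mulVec, ← mulVec_transpose]
    have h2 : Jᵀ *ᵥ y ⬝ᵥ y = -(y ⬝ᵥ J *ᵥ y) := by
      rw [hJ, neg_mulVec, neg_dotProduct, dotProduct_comm]
    linarith [h1, h2 ▸ h1]
  have hRy : (0:ℝ) ≤ y ⬝ᵥ R *ᵥ y := by simpa using hR.dotProduct_mulVec_nonneg y
  have hQv : (0:ℝ) ≤ v ⬝ᵥ y := by simpa [hy] using hQ.dotProduct_mulVec_nonneg v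
  -- key: y ⬝ᵥ v = -h * (y ⬝ᵥ R *ᵥ y)
  have hkey : y ⬝ᵥ v = -(h * (y ⬝ᵥ R *ᵥ y)) := by
    calc y ⬝ᵥ v = y ⬝ᵥ (h • ((J - R) *ᵥ y)) := by rw [← hveq]
    _ = h * (y ⬝ᵥ ((J - R) *ᵥ y)) := by rw [dotProduct_smul, smul_eq_mul]
    _ = h * (y ⬝ᵥ J *ᵥ y - y ⬝ᵥ R *ᵥ y) := by rw [sub_mulVec, dotProduct_sub]
    _ = -(h * (y ⬝ᵥ R *ᵥ y)) := by rw [hJy]; ring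
  have hyv : y ⬝ᵥ v = v ⬝ᵥ y := dotProduct_comm _ _
  have hzero : v ⬝ᵥ y = 0 := by
    nlinarith [mul_nonneg hh.le hRy]
  have hy0 : y = 0 := by
    have : Q *ᵥ v = 0 := by
      have := (hQ.dotProduct_mulVec_zero_iff v).mp (by simpa [hy] using hzero)
      exact this
    simpa [hy] using this
  apply hv
  rw [hveq, hy0, mulVec_zero, smul_zero]
end

section
/- If A = (J−R)Q with J skew-symmetric, R symmetric positive semidefinite, Q symmetric positive definite, then for all t ≥ 0 and all v ∈ ℝⁿ, ‖e^{tA} v‖_Q ≤ ‖v‖_Q, where ‖z‖_Q² = zᵀQz. -/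
open Matrix

/-- For `A = (J - R) Q` with `J` skew-symmetric, `R ⪰ 0` symmetric and `Q ≻ 0` symmetric,
the semigroup `e^{tA}` is a contraction in the `Q`-norm `‖z‖_Q = √(zᵀ Q z)`:
`‖e^{tA} v‖_Q ≤ ‖v‖_Q` for all `t ≥ 0`. -/
theorem pH_semigroup_Q_contraction
    {n : ℕ} (J R Q : Matrix (Fin n) (Fin n) ℝ)
    (hJ : Jᵀ = -J) (hR : R.PosSemidef) (hQ : Q.PosDef)
    (t : ℝ) (ht : 0 ≤ t) (v : Fin n → ℝ) :
    Real.sqrt ((NormedSpace.exp (t • ((J - R) * Q)) *ᵥ v)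
        ⬝ᵥ (Q *ᵥ (NormedSpace.exp (t • ((J - R) * Q)) *ᵥ v)))
      ≤ Real.sqrt (v ⬝ᵥ (Q *ᵥ v)) := by
  letI : SeminormedRing (Matrix (Fin n) (Fin n) ℝ) := Matrix.linftyOpSemiNormedRing
  letI : NormedRing (Matrix (Fin n) (Fin n) ℝ) := Matrix.linftyOpNormedRing
  letI : NormedAlgebra ℝ (Matrix (Fin n) (Fin n) ℝ) := Matrix.linftyOpNormedAlgebra
  set A : Matrix (Fin n) (Fin n) ℝ := (J - R) * Q with hA
  set X : ℝ → (Fin n → ℝ) := fun s => NormedSpace.exp (s • A) *ᵥ v with hX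
  -- continuous linear map M ↦ M *ᵥ v
  let L : Matrix (Fin n) (Fin n) ℝ →ₗ[ℝ] (Fin n → ℝ) :=
    { toFun := fun M => M *ᵥ v
      map_add' := fun M N => Matrix.add_mulVec M N v
      map_smul' := fun c M => smul_mulVec c M v }
  have hx : ∀ s : ℝ, HasDerivAt X (A *ᵥ X s) s := by
    intro s
    have h1 : HasDerivAt (fun u : ℝ => NormedSpace.exp (u • A))
        (A * NormedSpace.exp (s • A)) s := hasDerivAt_exp_smul_const' A s
    have h2 := (L.toContinuousLinearMap.hasFDerivAt.comp_hasDerivAt s h1)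
    have h3 : HasDerivAt X ((A * NormedSpace.exp (s • A)) *ᵥ v) s := h2
    rw [← Matrix.mulVec_mulVec] at h3
    exact h3
  set G : ℝ → ℝ := fun s => X s ⬝ᵥ (Q *ᵥ X s) with hGdef
  have hG : ∀ s : ℝ, HasDerivAt G
      ((A *ᵥ X s) ⬝ᵥ (Q *ᵥ X s) + X s ⬝ᵥ (Q *ᵥ (A *ᵥ X s))) s := by
    intro s
    have hXi : ∀ i, HasDerivAt (fun u => X u i) ((A *ᵥ X s) i) s := fun i =>
      (ContinuousLinearMap.proj (R := ℝ) (φ := fun _ : Fin n => ℝ)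
        i).hasFDerivAt.comp_hasDerivAt s (hx s)
    have key : HasDerivAt (fun u => ∑ i, ∑ j, X u i * Q i j * X u j)
        (∑ i, ∑ j, ((A *ᵥ X s) i * Q i j * X s j + X s i * Q i j * (A *ᵥ X s) j)) s := by
      refine HasDerivAt.fun_sum fun i _ => HasDerivAt.fun_sum fun j _ => ?_
      simpa [mul_comm, mul_assoc, mul_left_comm] using
        (((hXi i).mul_const (Q i j)).fun_mul (hXi j))
    have hGeq : G = fun u => ∑ i, ∑ j, X u i * Q i j * X u j := by
      funext u
      simp [G, dotProduct, Matrix.mulVec, Finset.mul_sum, mul_assoc]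
    have hDeq : (A *ᵥ X s) ⬝ᵥ (Q *ᵥ X s) + X s ⬝ᵥ (Q *ᵥ (A *ᵥ X s))
        = ∑ i, ∑ j, ((A *ᵥ X s) i * Q i j * X s j + X s i * Q i j * (A *ᵥ X s) j) := by
      simp [dotProduct, Matrix.mulVec, Finset.mul_sum, mul_assoc, Finset.sum_add_distrib]
    rw [hGeq, hDeq]; exact key
  -- the derivative is nonpositive
  have hnonpos : ∀ s : ℝ,
      (A *ᵥ X s) ⬝ᵥ (Q *ᵥ X s) + X s ⬝ᵥ (Q *ᵥ (A *ᵥ X s)) ≤ 0 := by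
    intro s
    set x := X s with hxdef
    set y := Q *ᵥ x with hy
    have hQs : Qᵀ = Q := by simpa using hQ.1.eq
    have hRs : Rᵀ = R := by simpa using hR.1.eq
    have hAx : A *ᵥ x = (J - R) *ᵥ y := by rw [hA, ← Matrix.mulVec_mulVec, hy]
    have h1 : (A *ᵥ x) ⬝ᵥ y = y ⬝ᵥ ((-J - R) *ᵥ y) := by
      have hT : (J - R)ᵀ = -J - R := by rw [Matrix.transpose_sub, hJ, hRs]
      rw [hAx, dotProduct_comm, Matrix.dotProduct_mulVec, ← Matrix.mulVec_transpose, hT]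
      exact dotProduct_comm _ _
    have h2 : x ⬝ᵥ (Q *ᵥ (A *ᵥ x)) = y ⬝ᵥ ((J - R) *ᵥ y) := by
      rw [Matrix.dotProduct_mulVec, ← Matrix.mulVec_transpose, hQs, ← hy, hAx]
    have hsum : (A *ᵥ x) ⬝ᵥ (Q *ᵥ x) + x ⬝ᵥ (Q *ᵥ (A *ᵥ x))
        = -(2 * (y ⬝ᵥ (R *ᵥ y))) := by
      rw [← hy, h1, h2, ← dotProduct_add, ← Matrix.add_mulVec]
      have : (-J - R) + (J - R) = -(2 • R) := by abel
      rw [this]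
      simp [Matrix.neg_mulVec, Matrix.smul_mulVec, two_smul, dotProduct_add,
        Matrix.add_mulVec]
      ring
    rw [hsum]
    have h0 : 0 ≤ y ⬝ᵥ (R *ᵥ y) := by
      have := hR.dotProduct_mulVec_nonneg y
      simpa using this
    linarith
  have hdiff : Differentiable ℝ G := fun s => (hG s).differentiableAt
  have hanti : Antitone G := by
    refine antitone_of_deriv_nonpos hdiff fun s => ?_
    rw [(hG s).deriv]; exact hnonpos s
  have hle : G t ≤ G 0 := hanti ht
  have hG0 : G 0 = v ⬝ᵥ (Q *ᵥ v) := by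
    simp [G, X]
  have := hG0 ▸ hle
  exact Real.sqrt_le_sqrt this
end

section
/- The evaluation map E : H¹([0,T], ℝⁿ) → L²([0,T], ℝⁿ) × (ℝⁿ)^{M+1}, φ ↦ (φ, φ(t₀), …, φ(t_M)), has dense range, where 0 = t₀ < t₁ < … < t_M = T. -/
open Matrix MeasureTheory

theorem weier (T : ℝ) (f : ℝ → ℝ) (hf : Continuous f) (δ : ℝ) (hδ : 0 < δ) :
    ∃ P : Polynomial ℝ, ∀ x ∈ Set.Icc (0:ℝ) T, |Polynomial.eval x P - f x| ≤ δ := by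
  have h := polynomialFunctions_closure_eq_top 0 T
  set F : C(Set.Icc (0:ℝ) T, ℝ) := ⟨fun x => f x, hf.comp continuous_subtype_val⟩
  have hF : F ∈ closure ((polynomialFunctions (Set.Icc (0:ℝ) T)) : Set C(Set.Icc (0:ℝ) T, ℝ)) := by
    have : F ∈ (polynomialFunctions (Set.Icc (0:ℝ) T)).topologicalClosure := by rw [h]; trivial
    exact this
  rw [Metric.mem_closure_iff] at hF
  obtain ⟨q, hq, hdist⟩ := hF δ hδ
  rw [polynomialFunctions_coe] at hq
  obtain ⟨P, rfl⟩ := hq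
  refine ⟨P, fun x hx => ?_⟩
  have := ContinuousMap.dist_apply_le_dist (f := F) (g := Polynomial.toContinuousMapOnAlgHom _ P) ⟨x, hx⟩
  rw [Real.dist_eq] at this
  have h2 : |Polynomial.eval x P - f x| ≤ dist F (Polynomial.toContinuousMapOnAlgHom _ P) := by
    rw [abs_sub_comm]; simpa [F, Polynomial.toContinuousMapOnAlgHom] using this
  linarith [le_of_lt hdist, h2]


/-- The evaluation map `E : H¹([0,T],ℝⁿ) → L²([0,T],ℝⁿ) × (ℝⁿ)^{M+1}`,
`φ ↦ (φ, φ(t₀), …, φ(t_M))`, has dense range: any `g ∈ L²` together with any prescribed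
node values `v` can be simultaneously approximated to accuracy `ε` by an `H¹` function
(represented by a continuous representative `φ` with square-integrable weak derivative `Dφ`). -/
theorem evaluation_map_dense_range
    {n M : ℕ} (T : ℝ) (hT : 0 < T) (t : Fin (M + 1) → ℝ)
    (htmono : StrictMono t) (ht0 : t 0 = 0) (htM : t (Fin.last M) = T)
    (g : ℝ → Fin n → ℝ) (hg : MemLp g 2 (volume.restrict (Set.Icc (0 : ℝ) T)))
    (v : Fin (M + 1) → Fin n → ℝ) (ε : ℝ) (hε : 0 < ε) :
    ∃ φ Dφ : ℝ → Fin n → ℝ,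
      (∀ s ∈ Set.Icc (0 : ℝ) T, φ s = φ 0 + ∫ τ in (0 : ℝ)..s, Dφ τ) ∧
      MemLp Dφ 2 (volume.restrict (Set.Icc (0 : ℝ) T)) ∧
      eLpNorm (fun s => φ s - g s) 2 (volume.restrict (Set.Icc (0 : ℝ) T))
        < ENNReal.ofReal ε ∧
      ∀ i : Fin (M + 1), Real.sqrt ((φ (t i) - v i) ⬝ᵥ (φ (t i) - v i)) < ε := by
  classical
  set μ := volume.restrict (Set.Icc (0 : ℝ) T) with hμ
  have hM : M ≠ 0 := by
    rintro rfl
    rw [show Fin.last 0 = 0 from rfl, ht0] at htM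
    exact absurd htM.symm hT.ne'
  set pairs : Finset (Fin (M+1) × Fin (M+1)) :=
    Finset.univ.filter (fun p => p.1 ≠ p.2) with hpairs
  have hpairs_ne : pairs.Nonempty := by
    refine ⟨(0, Fin.last M), ?_⟩
    simp only [hpairs, Finset.mem_filter, Finset.mem_univ, true_and]
    simp [Fin.ext_iff]
    omega
  set gap : ℝ := pairs.inf' hpairs_ne (fun p => |t p.1 - t p.2|) with hgapdef
  have hgap_pos : 0 < gap := by
    rw [hgapdef, Finset.lt_inf'_iff]
    rintro ⟨i, j⟩ hij
    have hij' : i ≠ j := by simpa [hpairs] using hij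
    have : t i ≠ t j := fun h => hij' (htmono.injective h)
    exact abs_pos.mpr (sub_ne_zero.mpr this)
  have hgap_le : ∀ i j : Fin (M+1), i ≠ j → gap ≤ |t i - t j| := by
    intro i j hij
    have hmem : (i, j) ∈ pairs := by
      simp only [hpairs, Finset.mem_filter, Finset.mem_univ, true_and]
      exact hij
    exact Finset.inf'_le (fun p : Fin (M+1) × Fin (M+1) => |t p.1 - t p.2|) hmem
  -- Step A : continuous compactly supported approximation of g
  have h2top : (2 : ENNReal) ≠ ⊤ := by norm_num
  obtain ⟨f, f_supp, hfg, f_cont, f_mem⟩ :=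
    hg.exists_hasCompactSupport_eLpNorm_sub_le h2top
      (ε := ENNReal.ofReal (ε/4)) (by simp; positivity)
  -- Step B : polynomial approximation of f
  obtain ⟨δ₁, hδ₁pos, hδ₁bd⟩ : ∃ d : ℝ, 0 < d ∧ T ^ ((1:ℝ)/2) * d ≤ ε/4 := by
    have hs0 : (0:ℝ) ≤ T ^ ((1:ℝ)/2) := Real.rpow_nonneg hT.le _
    refine ⟨ε / (4 * (T ^ ((1:ℝ)/2) + 1)), by positivity, ?_⟩
    rw [mul_comm, div_mul_eq_mul_div, div_le_div_iff₀ (by positivity) (by norm_num)]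
    nlinarith [hε.le]
  have hP : ∀ j : Fin n, ∃ P : Polynomial ℝ,
      ∀ x ∈ Set.Icc (0:ℝ) T, |Polynomial.eval x P - f x j| ≤ δ₁ := fun j =>
    weier T (fun x => f x j) ((continuous_apply j).comp f_cont) δ₁ hδ₁pos
  choose P hPf using hP
  set φ₀ : ℝ → Fin n → ℝ := fun x j => Polynomial.eval x (P j) with hφ₀
  have φ₀_cont : Continuous φ₀ := continuous_pi fun j => (P j).continuous
  -- Step C : spikes
  set a : Fin (M+1) → Fin n → ℝ := fun i => v i - φ₀ (t i) with ha
  set A : ℝ := ∑ i, ‖a i‖ with hA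
  have hA0 : 0 ≤ A := Finset.sum_nonneg fun i _ => norm_nonneg _
  obtain ⟨q, hq0, hAq⟩ : ∃ q : ℝ, 0 < q ∧ A * q ≤ ε/4 := by
    refine ⟨ε / (4 * (A + 1)), by positivity, ?_⟩
    rw [mul_comm, div_mul_eq_mul_div, div_le_div_iff₀ (by positivity) (by norm_num)]
    nlinarith [hε.le]
  obtain ⟨δ, hδpos, hδgap, hδq⟩ :
      ∃ δ : ℝ, 0 < δ ∧ δ ≤ gap ∧ (2*δ) ^ ((1:ℝ)/2) ≤ q := by
    refine ⟨min gap (q^2 / 2), lt_min hgap_pos (by positivity), min_le_left _ _, ?_⟩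
    have h1 : (2 * min gap (q^2/2) : ℝ) ≤ q^2 := by
      have := min_le_right gap (q^2/2); linarith
    calc (2 * min gap (q^2/2)) ^ ((1:ℝ)/2) ≤ (q^2) ^ ((1:ℝ)/2) :=
          Real.rpow_le_rpow (by positivity) h1 (by norm_num)
      _ = q := by rw [← Real.sqrt_eq_rpow]; exact Real.sqrt_sq hq0.le
  set bump : ∀ i : Fin (M+1), ContDiffBump (t i) := fun i =>
    ⟨δ/2, δ, by positivity, by linarith⟩ with hbump
  set φ : ℝ → Fin n → ℝ := fun x => φ₀ x + ∑ i, (bump i) x • a i with hφdef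
  set Dφ : ℝ → Fin n → ℝ := fun x =>
    (fun j => Polynomial.eval x (Polynomial.derivative (P j)))
      + ∑ i, (deriv (fun y => (bump i : ℝ → ℝ) y) x) • a i with hDφ
  have spikes_cont : Continuous (fun x => ∑ i : Fin (M+1), (bump i) x • a i) :=
    continuous_finset_sum _ fun i _ => ((bump i).continuous).smul continuous_const
  have φ_cont : Continuous φ := φ₀_cont.add spikes_cont
  have hderiv : ∀ x : ℝ, HasDerivAt φ (Dφ x) x := by
    intro x
    apply HasDerivAt.add
    · exact hasDerivAt_pi.2 fun j => (P j).hasDerivAt x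
    · exact HasDerivAt.fun_sum fun i _ =>
        ((((bump i).contDiff (n := ⊤)).differentiable
          (by simp)).differentiableAt.hasDerivAt).smul_const (a i)
  have Dφ_cont : Continuous Dφ := by
    apply Continuous.add
    · exact continuous_pi fun j => (Polynomial.derivative (P j)).continuous
    · exact continuous_finset_sum _ fun i _ =>
        (((bump i).contDiff (n := ⊤)).continuous_deriv (by exact_mod_cast le_top)).smul
          continuous_const
  refine ⟨φ, Dφ, ?_, ?_, ?_, ?_⟩
  -- FTC
  · intro s _
    have := intervalIntegral.integral_eq_sub_of_hasDerivAt
      (f := φ) (f' := Dφ) (a := 0) (b := s)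
      (fun x _ => hderiv x) (Dφ_cont.intervalIntegrable 0 s)
    rw [this]; abel
  -- Memℒp Dφ
  · obtain ⟨C, hC⟩ := isCompact_Icc.exists_bound_of_continuousOn
      (Dφ_cont.continuousOn (s := Set.Icc (0:ℝ) T))
    refine ⟨Dφ_cont.aestronglyMeasurable, ?_⟩
    have hb : ∀ᵐ x ∂μ, ‖Dφ x‖ ≤ C := by
      filter_upwards [ae_restrict_mem measurableSet_Icc] with x hx using hC x hx
    refine lt_of_le_of_lt (eLpNorm_le_of_ae_bound hb) ?_
    have hμuniv : μ Set.univ ≠ ⊤ := by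
      rw [hμ, Measure.restrict_apply_univ, Real.volume_Icc]; simp
    exact ENNReal.mul_lt_top
      (ENNReal.rpow_lt_top_of_nonneg (by norm_num) hμuniv) ENNReal.ofReal_lt_top
  -- L² estimate
  · have S_meas : AEStronglyMeasurable (fun s => ∑ i : Fin (M+1), (bump i) s • a i) μ :=
      spikes_cont.aestronglyMeasurable
    have pf_meas : AEStronglyMeasurable (φ₀ - f) μ :=
      (φ₀_cont.sub f_cont).aestronglyMeasurable
    have fg_meas : AEStronglyMeasurable (f - g) μ :=
      f_cont.aestronglyMeasurable.sub hg.1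
    have decomp : (fun s => φ s - g s)
        = (fun s => ∑ i : Fin (M+1), (bump i) s • a i) + ((φ₀ - f) + (f - g)) := by
      funext s
      simp only [Pi.add_apply, Pi.sub_apply, hφdef]
      abel
    -- bound on each spike
    have hsp : ∀ i : Fin (M+1), eLpNorm (fun s => (bump i) s • a i) 2 μ
        ≤ ENNReal.ofReal ‖a i‖ * ENNReal.ofReal (2*δ) ^ ((1:ℝ)/2) := by
      intro i
      have hmono : ∀ s, ‖(bump i) s • a i‖
          ≤ ‖(Metric.closedBall (t i) δ).indicator (fun _ => (‖a i‖ : ℝ)) s‖ := by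
        intro s
        by_cases hs : s ∈ Metric.closedBall (t i) δ
        · rw [Set.indicator_of_mem hs, norm_smul, Real.norm_eq_abs, Real.norm_eq_abs,
            abs_of_nonneg (bump i).nonneg, abs_of_nonneg (norm_nonneg _)]
          exact mul_le_of_le_one_left (norm_nonneg _) (bump i).le_one
        · have hd : δ < dist s (t i) := by
            simp only [Metric.mem_closedBall, not_le] at hs; exact hs
          have : (bump i) s = 0 := (bump i).zero_of_le_dist hd.le
          simp [this, Set.indicator_of_notMem hs]
      calc eLpNorm (fun s => (bump i) s • a i) 2 μ
          ≤ eLpNorm ((Metric.closedBall (t i) δ).indicator (fun _ => (‖a i‖ : ℝ))) 2 μ :=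
            eLpNorm_mono hmono
        _ = ↑‖(‖a i‖ : ℝ)‖₊ * μ (Metric.closedBall (t i) δ) ^ ((1:ℝ)/2) := by
            rw [eLpNorm_indicator_const measurableSet_closedBall (by norm_num) (by norm_num)]
            norm_num
            rw [enorm_eq_nnnorm]
        _ ≤ ENNReal.ofReal ‖a i‖ * ENNReal.ofReal (2*δ) ^ ((1:ℝ)/2) := by
            refine mul_le_mul' (le_of_eq ?_) (ENNReal.rpow_le_rpow ?_ (by norm_num))
            · rw [← enorm_eq_nnnorm, ← ofReal_norm, norm_norm]
            · calc μ (Metric.closedBall (t i) δ)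
                  ≤ volume (Metric.closedBall (t i) δ) := Measure.restrict_le_self _
                _ = ENNReal.ofReal (2*δ) := by rw [Real.volume_closedBall]
    have hSsum : eLpNorm (fun s => ∑ i : Fin (M+1), (bump i) s • a i) 2 μ
        ≤ ENNReal.ofReal (ε/4) := by
      have hrw : (fun s => ∑ i : Fin (M+1), (bump i) s • a i)
          = ∑ i : Fin (M+1), (fun s => (bump i) s • a i) := by
        funext s; simp
      rw [hrw]
      calc eLpNorm (∑ i : Fin (M+1), (fun s => (bump i) s • a i)) 2 μ
          ≤ ∑ i : Fin (M+1), eLpNorm (fun s => (bump i) s • a i) 2 μ :=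
            eLpNorm_sum_le (fun i _ =>
              (((bump i).continuous).smul continuous_const).aestronglyMeasurable) one_le_two
        _ ≤ ∑ i : Fin (M+1), ENNReal.ofReal ‖a i‖ * ENNReal.ofReal (2*δ) ^ ((1:ℝ)/2) :=
            Finset.sum_le_sum fun i _ => hsp i
        _ = (∑ i : Fin (M+1), ENNReal.ofReal ‖a i‖) * ENNReal.ofReal (2*δ) ^ ((1:ℝ)/2) :=
            (Finset.sum_mul _ _ _).symm
        _ = ENNReal.ofReal A * ENNReal.ofReal ((2*δ) ^ ((1:ℝ)/2)) := by
            rw [← ENNReal.ofReal_sum_of_nonneg (fun i _ => norm_nonneg _),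
              ← ENNReal.ofReal_rpow_of_pos (by positivity)]
        _ = ENNReal.ofReal (A * (2*δ) ^ ((1:ℝ)/2)) := (ENNReal.ofReal_mul hA0).symm
        _ ≤ ENNReal.ofReal (ε/4) := by
            apply ENNReal.ofReal_le_ofReal
            calc A * (2*δ) ^ ((1:ℝ)/2) ≤ A * q := by
                  apply mul_le_mul_of_nonneg_left hδq hA0
              _ ≤ ε/4 := hAq
    -- polynomial approx bound
    have hpf : eLpNorm (φ₀ - f) 2 μ ≤ ENNReal.ofReal (ε/4) := by
      have hb : ∀ᵐ x ∂μ, ‖(φ₀ - f) x‖ ≤ δ₁ := by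
        filter_upwards [ae_restrict_mem measurableSet_Icc] with x hx
        rw [Pi.sub_apply]
        apply (pi_norm_le_iff_of_nonneg hδ₁pos.le).mpr
        intro j
        simpa [Real.norm_eq_abs] using hPf j x hx
      refine le_trans (eLpNorm_le_of_ae_bound hb) ?_
      have hμu : μ Set.univ = ENNReal.ofReal T := by
        rw [hμ, Measure.restrict_apply_univ, Real.volume_Icc, sub_zero]
      rw [hμu]
      have htr : ((2:ENNReal)).toReal⁻¹ = ((1:ℝ)/2) := by norm_num
      rw [htr, ENNReal.ofReal_rpow_of_pos hT, ← ENNReal.ofReal_mul (by positivity)]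
      exact ENNReal.ofReal_le_ofReal hδ₁bd
    -- continuous approx bound
    have hfg' : eLpNorm (f - g) 2 μ ≤ ENNReal.ofReal (ε/4) := by
      rw [eLpNorm_sub_comm]; exact hfg
    rw [decomp]
    calc eLpNorm ((fun s => ∑ i : Fin (M+1), (bump i) s • a i) + ((φ₀ - f) + (f - g))) 2 μ
        ≤ eLpNorm (fun s => ∑ i : Fin (M+1), (bump i) s • a i) 2 μ
            + eLpNorm ((φ₀ - f) + (f - g)) 2 μ :=
          eLpNorm_add_le S_meas (pf_meas.add fg_meas) one_le_two
      _ ≤ eLpNorm (fun s => ∑ i : Fin (M+1), (bump i) s • a i) 2 μ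
            + (eLpNorm (φ₀ - f) 2 μ + eLpNorm (f - g) 2 μ) := by
          gcongr
          exact eLpNorm_add_le pf_meas fg_meas one_le_two
      _ ≤ ENNReal.ofReal (ε/4) + (ENNReal.ofReal (ε/4) + ENNReal.ofReal (ε/4)) := by
          gcongr
      _ = ENNReal.ofReal (ε/4 + (ε/4 + ε/4)) := by
          rw [← ENNReal.ofReal_add (by positivity) (by positivity),
            ← ENNReal.ofReal_add (by positivity) (by positivity)]
      _ < ENNReal.ofReal ε := by
          rw [ENNReal.ofReal_lt_ofReal_iff hε]; linarith
  -- node values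
  · intro i
    have hzero : ∀ j : Fin (M+1), j ≠ i → (bump j) (t i) = 0 := by
      intro j hj
      apply (bump j).zero_of_le_dist
      rw [Real.dist_eq]
      calc δ ≤ gap := hδgap
        _ ≤ |t i - t j| := hgap_le i j (Ne.symm hj)
    have hone : (bump i) (t i) = 1 :=
      (bump i).one_of_mem_closedBall (by simp [Metric.mem_closedBall]; positivity)
    have hnode : φ (t i) = v i := by
      have hsum : ∑ j : Fin (M+1), (bump j) (t i) • a j = a i := by
        rw [Finset.sum_eq_single i]
        · rw [hone, one_smul]
        · intro j _ hj; rw [hzero j hj, zero_smul]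
        · intro h; exact absurd (Finset.mem_univ i) h
      simp only [hφdef, hsum]
      simp only [ha]
      abel
    rw [hnode]
    simp only [sub_self]
    have hdot : (0 : Fin n → ℝ) ⬝ᵥ (0 : Fin n → ℝ) = 0 := by simp
    rw [hdot, Real.sqrt_zero]
    exact hε
end
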